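/- Let (R, m) be a Noetherian local ring of prime characteristic p such that every ideal generated by a system of parameters is Frobenius closed, and suppose there exists N such that every system of parameters contained in m^N is a d-sequence. Then every system of parameters of R is a d-sequence. -/

import Mathlib

open Ideal IsLocalRing

section Prelim

variable {R : Type*} [CommRing R]

/-- The Frobenius power `I^{[q]}`: the ideal generated by `q`-th powers of elements of `I`. -/
def frobeniusPower (I : Ideal R) (q : ℕ) : Ideal R :=
  Ideal.span ((fun a => a ^ q) '' (I : Set R))

/-- The Frobenius closure `I^F = {x | x^{p^e} ∈ I^{[p^e]} for some e}`. -/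
def frobeniusClosure (p : ℕ) (I : Ideal R) : Ideal R :=
  Ideal.span {x : R | ∃ e : ℕ, x ^ p ^ e ∈ frobeniusPower I (p ^ e)}

/-- `I` is Frobenius closed if `I^F = I`. -/
def IsFrobeniusClosed (p : ℕ) (I : Ideal R) : Prop :=
  frobeniusClosure p I = I

/-- The ideal generated by the entries of `x` before index `i`. -/
def prevSpan {n : ℕ} (x : Fin n → R) (i : Fin n) : Ideal R :=
  Ideal.span (x '' {j : Fin n | j < i})

/-- `x` is a d-sequence. -/
def IsDSequence {n : ℕ} (x : Fin n → R) : Prop :=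
  ∀ i j : Fin n, i ≤ j →
    (prevSpan x i).colon (Ideal.span {x i * x j}) = (prevSpan x i).colon (Ideal.span {x j})

/-- `x` is a (full) system of parameters of the local ring `R`. -/
def IsSOP [IsLocalRing R] {n : ℕ} (x : Fin n → R) : Prop :=
  ringKrullDim R = n ∧
    (Ideal.span (Set.range x)).radical = IsLocalRing.maximalIdeal R

/-- `x` is part of a system of parameters. -/
def IsPartialSOP [IsLocalRing R] {t : ℕ} (x : Fin t → R) : Prop :=
  ∃ (n : ℕ) (h : t ≤ n) (y : Fin n → R), IsSOP y ∧ ∀ i : Fin t, y (Fin.castLE h i) = x i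

/-- `x` is a regular sequence on `R`. -/
def IsRegSeq {r : ℕ} (x : Fin r → R) : Prop :=
  Ideal.span (Set.range x) ≠ ⊤ ∧
    ∀ i : Fin r, ∀ y : R, y * x i ∈ prevSpan x i → y ∈ prevSpan x i

end Prelim

section Aux

variable {R : Type*} [CommRing R]

lemma frobeniusPower_mono {I J : Ideal R} (h : I ≤ J) (q : ℕ) :
    frobeniusPower I q ≤ frobeniusPower J q :=
  Ideal.span_mono (Set.image_mono (SetLike.coe_subset_coe.mpr h))

lemma frobeniusPower_eq_map (p : ℕ) [Fact p.Prime] [CharP R p] (I : Ideal R) (e : ℕ) :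
    frobeniusPower I (p ^ e) = I.map (iterateFrobenius R p e) := by
  haveI : ExpChar R p := .prime Fact.out
  have h : (fun a : R => a ^ p ^ e) = ⇑(iterateFrobenius R p e) := by
    funext a; rw [iterateFrobenius_def]
  rw [frobeniusPower, h]
  rfl

lemma pow_mem_frobeniusPower (p : ℕ) [Fact p.Prime] [CharP R p] {I : Ideal R} {a : R}
    (ha : a ∈ I) (e : ℕ) : a ^ p ^ e ∈ frobeniusPower I (p ^ e) := by
  haveI : ExpChar R p := .prime Fact.out
  rw [frobeniusPower_eq_map]
  have := Ideal.mem_map_of_mem (iterateFrobenius R p e) ha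
  rwa [iterateFrobenius_def] at this

lemma frobeniusPower_span (p : ℕ) [Fact p.Prime] [CharP R p] (s : Set R) (e : ℕ) :
    frobeniusPower (Ideal.span s) (p ^ e) = Ideal.span ((fun a => a ^ p ^ e) '' s) := by
  haveI : ExpChar R p := .prime Fact.out
  have h : (fun a : R => a ^ p ^ e) = ⇑(iterateFrobenius R p e) := by
    funext a; rw [iterateFrobenius_def]
  rw [frobeniusPower_eq_map, Ideal.map_span, h]

lemma isSOP_congr [IsLocalRing R] {n : ℕ} {x y : Fin n → R} (hx : IsSOP x)
    (h1 : ∀ k, ∃ m, 0 < m ∧ y k ^ m ∈ Ideal.span (Set.range x))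
    (h2 : ∀ k, ∃ m, 0 < m ∧ x k ^ m ∈ Ideal.span (Set.range y)) : IsSOP y := by
  refine ⟨hx.1, ?_⟩
  rw [← hx.2]
  apply le_antisymm <;> rw [Ideal.radical_le_radical_iff, Ideal.span_le] <;>
    rintro _ ⟨k, rfl⟩
  · obtain ⟨m, hm, hmem⟩ := h1 k
    exact ⟨m, hmem⟩
  · obtain ⟨m, hm, hmem⟩ := h2 k
    exact ⟨m, hmem⟩

lemma mem_of_forall_mem_sup_pow [IsNoetherianRing R] [IsLocalRing R]
    {I : Ideal R} (_hI : I ≠ ⊤) {a : R}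
    (h : ∀ t : ℕ, a ∈ I ⊔ (IsLocalRing.maximalIdeal R) ^ t) : a ∈ I := by
  rw [← Ideal.Quotient.eq_zero_iff_mem]
  have hbot := Ideal.iInf_pow_smul_eq_bot_of_isLocalRing
      (I := IsLocalRing.maximalIdeal R) (M := R ⧸ I)
      (Ideal.IsMaximal.ne_top (IsLocalRing.maximalIdeal.isMaximal R))
  have hmem : (Ideal.Quotient.mk I a) ∈ (⊥ : Submodule R (R ⧸ I)) := by
    rw [← hbot, Submodule.mem_iInf]
    intro t
    obtain ⟨b, hb, c, hc, rfl⟩ := Submodule.mem_sup.mp (h t)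
    have heq : Ideal.Quotient.mk I (b + c) = c • (1 : R ⧸ I) := by
      rw [Algebra.smul_def, mul_one, Ideal.Quotient.algebraMap_eq, map_add,
        Ideal.Quotient.eq_zero_iff_mem.mpr hb, zero_add]
    rw [heq]
    exact Submodule.smul_mem_smul hc Submodule.mem_top
  simpa using hmem

lemma frobeniusClosure_prevSpan_le [IsNoetherianRing R] [IsLocalRing R]
    (p : ℕ) [Fact p.Prime] [CharP R p]
    (hFC : ∀ (n : ℕ) (x : Fin n → R), IsSOP x →
      IsFrobeniusClosed p (Ideal.span (Set.range x)))
    {n : ℕ} {x : Fin n → R} (hx : IsSOP x) (i : Fin n) :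
    frobeniusClosure p (prevSpan x i) ≤ prevSpan x i := by
  have hxm : ∀ k, x k ∈ IsLocalRing.maximalIdeal R := fun k =>
    hx.2 ▸ Ideal.le_radical (Ideal.subset_span ⟨k, rfl⟩)
  have hIm : prevSpan x i ≤ IsLocalRing.maximalIdeal R := by
    rw [prevSpan, Ideal.span_le]; rintro _ ⟨k, -, rfl⟩; exact hxm k
  have hInt : prevSpan x i ≠ ⊤ :=
    ne_top_of_le_ne_top (Ideal.IsMaximal.ne_top (IsLocalRing.maximalIdeal.isMaximal R)) hIm
  rw [frobeniusClosure, Ideal.span_le]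
  rintro a ⟨e, he⟩
  refine mem_of_forall_mem_sup_pow hInt (fun t => ?_)
  set z : Fin n → R := fun k => if k < i then x k else x k ^ (t + 1) with hz
  have hprevle : prevSpan x i ≤ Ideal.span (Set.range z) := by
    rw [prevSpan, Ideal.span_le]
    rintro _ ⟨k, hk, rfl⟩
    exact Ideal.subset_span ⟨k, by simp [hz, Set.mem_setOf_eq.mp hk]⟩
  have hzsop : IsSOP z := by
    refine isSOP_congr hx (fun k => ⟨1, one_pos, ?_⟩) (fun k => ⟨t + 1, t.succ_pos, ?_⟩)
    · rw [pow_one]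
      have hcase : z k = x k ∨ z k = x k ^ (t + 1) := by
        by_cases hk : k < i <;> simp [hz, hk]
      rcases hcase with h | h <;> rw [h]
      · exact Ideal.subset_span ⟨k, rfl⟩
      · have hmx : x k ∈ Ideal.span (Set.range x) := Ideal.subset_span ⟨k, rfl⟩
        exact Ideal.pow_mem_of_mem _ hmx _ t.succ_pos
    · by_cases hk : k < i
      · have hmz : x k ∈ Ideal.span (Set.range z) := Ideal.subset_span ⟨k, by simp [hz, hk]⟩
        exact Ideal.pow_mem_of_mem _ hmz _ t.succ_pos
      · exact Ideal.subset_span ⟨k, by simp [hz, hk]⟩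
  have hmemz : a ∈ Ideal.span (Set.range z) := by
    rw [← hFC n z hzsop]
    exact Ideal.subset_span ⟨e, frobeniusPower_mono hprevle _ he⟩
  refine Ideal.span_le.mpr ?_ hmemz
  rintro _ ⟨k, rfl⟩
  by_cases hk : k < i
  · simp only [hz, if_pos hk]
    exact Ideal.mem_sup_left (Ideal.subset_span ⟨k, hk, rfl⟩)
  · simp only [hz, if_neg hk]
    exact Ideal.mem_sup_right
      (Ideal.pow_le_pow_right (Nat.le_succ t) (Ideal.pow_mem_pow (hxm k) (t + 1)))

end Aux


/-- if every sop-generated ideal is Frobenius closed and every system of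
parameters inside `m^N` is a d-sequence, then every system of parameters is a d-sequence. -/
theorem every_sop_dseq
    {R : Type*} [CommRing R] [IsNoetherianRing R] [IsLocalRing R]
    (p : ℕ) [Fact p.Prime] [CharP R p]
    (hFC : ∀ (n : ℕ) (x : Fin n → R), IsSOP x →
      IsFrobeniusClosed p (Ideal.span (Set.range x)))
    (N : ℕ)
    (hN : ∀ (n : ℕ) (x : Fin n → R), IsSOP x →
      (∀ i, x i ∈ (IsLocalRing.maximalIdeal R) ^ N) → IsDSequence x) :
    ∀ (n : ℕ) (x : Fin n → R), IsSOP x → IsDSequence x := by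
  intro n x hx
  have hp1 : 1 < p := (Fact.out : p.Prime).one_lt
  have hxm : ∀ k, x k ∈ IsLocalRing.maximalIdeal R := fun k =>
    hx.2 ▸ Ideal.le_radical (Ideal.subset_span ⟨k, rfl⟩)
  set q := p ^ N with hq
  have hq0 : 0 < q := Nat.pow_pos (n := N) (by omega)
  have hNq : N ≤ q := (Nat.lt_pow_self (n := N) hp1).le
  set xq : Fin n → R := fun k => x k ^ q with hxq
  have hxqsop : IsSOP xq := by
    refine isSOP_congr hx (fun k => ⟨1, one_pos, ?_⟩) (fun k => ⟨q, hq0, ?_⟩)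
    · rw [pow_one]
      have hmx : x k ∈ Ideal.span (Set.range x) := Ideal.subset_span ⟨k, rfl⟩
      exact Ideal.pow_mem_of_mem _ hmx _ hq0
    · exact Ideal.subset_span ⟨k, rfl⟩
  have hmemq : ∀ k, xq k ∈ (IsLocalRing.maximalIdeal R) ^ N :=
    fun k => Ideal.pow_le_pow_right hNq (Ideal.pow_mem_pow (hxm k) q)
  have hd := hN n xq hxqsop hmemq
  have hfp : ∀ i : Fin n, frobeniusPower (prevSpan x i) q = prevSpan xq i := by
    intro i
    rw [prevSpan, hq, frobeniusPower_span, prevSpan, Set.image_image]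
  intro i j hij
  apply le_antisymm
  · intro y hy
    rw [Ideal.mem_colon_span_singleton] at hy ⊢
    have hpow : (y * (x i * x j)) ^ q ∈ frobeniusPower (prevSpan x i) q :=
      pow_mem_frobeniusPower p hy N
    rw [hfp i] at hpow
    have h2 : y ^ q ∈ (prevSpan xq i).colon (Ideal.span {xq i * xq j}) := by
      rw [Ideal.mem_colon_span_singleton]
      have : y ^ q * (xq i * xq j) = (y * (x i * x j)) ^ q := by
        simp only [hxq]; ring
      rwa [this]
    rw [hd i j hij, Ideal.mem_colon_span_singleton] at h2
    have h3 : (y * x j) ^ q ∈ frobeniusPower (prevSpan x i) q := by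
      rw [hfp i]
      have : (y * x j) ^ q = y ^ q * xq j := by simp only [hxq]; ring
      rwa [this]
    have h4 : y * x j ∈ frobeniusClosure p (prevSpan x i) :=
      Ideal.subset_span ⟨N, h3⟩
    exact frobeniusClosure_prevSpan_le p hFC hx i h4
  · intro y hy
    rw [Ideal.mem_colon_span_singleton] at hy ⊢
    have : y * (x i * x j) = y * x j * x i := by ring
    rw [this]
    exact Ideal.mul_mem_right _ _ hy
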